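/- For γ > 0 and t > (1+√γ)², define A_t = t - γ - 1 and B_t = √((t-γ-1)² - 4γ). Then the function F(t) = (1/(2γ))[(A_t - B_t) - (γ+1) log(A_t - B_t) + (γ-1) log((γ+1)A_t - (γ-1)B_t + 4γ)] satisfies F'(t) = (t + γ - 1 - √((t-γ-1)²-4γ)) / (2γt) for all t > (1+√γ)². -/

import Mathlib

/-- The antiderivative formula for the Hilbert transform of the Marchenko–Pastur law:
F'(t) = (t + γ - 1 - √((t-γ-1)² - 4γ)) / (2γt) for t > (1+√γ)². -/
theorem hasDerivAt_MP_log_potential (γ : ℝ) (hγ : 0 < γ)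
    (t : ℝ) (ht : (1 + Real.sqrt γ) ^ 2 < t) :
    HasDerivAt
      (fun s : ℝ =>
        (1 / (2 * γ)) *
          (((s - γ - 1) - Real.sqrt ((s - γ - 1) ^ 2 - 4 * γ))
            - (γ + 1) * Real.log ((s - γ - 1) - Real.sqrt ((s - γ - 1) ^ 2 - 4 * γ))
            + (γ - 1) * Real.log
                ((γ + 1) * (s - γ - 1) - (γ - 1) * Real.sqrt ((s - γ - 1) ^ 2 - 4 * γ)
                  + 4 * γ)))
      ((t + γ - 1 - Real.sqrt ((t - γ - 1) ^ 2 - 4 * γ)) / (2 * γ * t)) t := by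
  have hsγ : 0 < Real.sqrt γ := Real.sqrt_pos.mpr hγ
  have hsq : Real.sqrt γ ^ 2 = γ := Real.sq_sqrt hγ.le
  have hA : 2 * Real.sqrt γ < t - γ - 1 := by nlinarith [ht, hsq]
  have hApos : 0 < t - γ - 1 := by nlinarith
  have hin : 0 < (t - γ - 1) ^ 2 - 4 * γ := by nlinarith
  set b := Real.sqrt ((t - γ - 1) ^ 2 - 4 * γ) with hbdef
  have hb2 : b ^ 2 = (t - γ - 1) ^ 2 - 4 * γ := Real.sq_sqrt hin.le
  have hbpos : 0 < b := Real.sqrt_pos.mpr hin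
  have hbA : b < t - γ - 1 := by nlinarith [hb2, hbpos]
  have hABpos : 0 < (t - γ - 1) - b := by linarith
  have hDpos : 0 < (γ + 1) * (t - γ - 1) - (γ - 1) * b + 4 * γ := by nlinarith [hbA, hbpos, hγ]
  have htpos : 0 < t := by nlinarith
  -- derivative of inner polynomial
  have h0 : HasDerivAt (fun s : ℝ => (s - γ - 1) ^ 2 - 4 * γ) (2 * (t - γ - 1)) t := by
    have h := (((hasDerivAt_id t).sub_const γ).sub_const 1).pow 2
    simpa using h.sub_const (4 * γ)
  have hB : HasDerivAt (fun s : ℝ => Real.sqrt ((s - γ - 1) ^ 2 - 4 * γ))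
      (2 * (t - γ - 1) / (2 * b)) t := h0.sqrt (ne_of_gt hin)
  have hA' : HasDerivAt (fun s : ℝ => s - γ - 1) 1 t := by
    simpa using ((hasDerivAt_id t).sub_const γ).sub_const 1
  have hAB : HasDerivAt (fun s : ℝ => (s - γ - 1) - Real.sqrt ((s - γ - 1) ^ 2 - 4 * γ))
      (1 - 2 * (t - γ - 1) / (2 * b)) t := hA'.sub hB
  have hlog1 : HasDerivAt (fun s : ℝ => Real.log ((s - γ - 1) - Real.sqrt ((s - γ - 1) ^ 2 - 4 * γ)))
      ((1 - 2 * (t - γ - 1) / (2 * b)) / ((t - γ - 1) - b)) t := hAB.log (ne_of_gt hABpos)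
  have hD : HasDerivAt (fun s : ℝ => (γ + 1) * (s - γ - 1) - (γ - 1) * Real.sqrt ((s - γ - 1) ^ 2 - 4 * γ) + 4 * γ)
      ((γ + 1) * 1 - (γ - 1) * (2 * (t - γ - 1) / (2 * b))) t :=
    ((hA'.const_mul (γ + 1)).sub (hB.const_mul (γ - 1))).add_const (4 * γ)
  have hlog2 : HasDerivAt (fun s : ℝ => Real.log ((γ + 1) * (s - γ - 1) - (γ - 1) * Real.sqrt ((s - γ - 1) ^ 2 - 4 * γ) + 4 * γ))
      (((γ + 1) * 1 - (γ - 1) * (2 * (t - γ - 1) / (2 * b))) / ((γ + 1) * (t - γ - 1) - (γ - 1) * b + 4 * γ)) t :=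
    hD.log (ne_of_gt hDpos)
  have hF := (((hAB.sub (hlog1.const_mul (γ + 1))).add (hlog2.const_mul (γ - 1))).const_mul (1 / (2 * γ)))
  convert hF using 1
  · rfl
  · rfl
  · rfl
  have hγ' : γ ≠ 0 := ne_of_gt hγ
  have ht' : t ≠ 0 := ne_of_gt htpos
  have hb' : b ≠ 0 := ne_of_gt hbpos
  have hAB' : (t - γ - 1) - b ≠ 0 := ne_of_gt hABpos
  have hD' : (γ + 1) * (t - γ - 1) - (γ - 1) * b + 4 * γ ≠ 0 := ne_of_gt hDpos
  have hD2 : (t - γ - 1) * (γ + 1) - b * (γ - 1) + γ * 4 ≠ 0 := by intro h; apply hD'; linarith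
  field_simp
  linear_combination (-b^2*γ + b^2 + 2*b*t*γ - b*γ^2 + b - t^2*γ - t^2 + t*γ^2 + 2*t*γ + t) * hb2
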